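/- Let K be a field of characteristic 2 and f = a_1 x^2 + a_2 x^4 + x^5 + x_2 x_3 ∈ K[[x, x_2, x_3]] for any a_1, a_2 ∈ K. Then μ(f) = 4. -/

import Mathlib

open MvPowerSeries

noncomputable def pd {n : ℕ} {K : Type} [Field K] (i : Fin n)
    (f : MvPowerSeries (Fin n) K) : MvPowerSeries (Fin n) K :=
  fun m => ((m i + 1 : ℕ) : K) * MvPowerSeries.coeff (R := K) (m + Finsupp.single i 1) f

/-- The Milnor number: dimension of the quotient by the Jacobian ideal. -/
noncomputable def milnor {n : ℕ} (K : Type) [Field K] (f : MvPowerSeries (Fin n) K) : ℕ :=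
  Module.finrank K (MvPowerSeries (Fin n) K ⧸ Ideal.span (Set.range fun i => pd i f))

open Finsupp

variable {K : Type} [Field K]


lemma f_coeff (a₁ a₂ : K) (d : Fin 3 →₀ ℕ) :
    coeff (R := K) d (C (σ := Fin 3) (R := K) a₁ * X 0 ^ 2 + C (σ := Fin 3) (R := K) a₂ * X 0 ^ 4 + X 0 ^ 5 + X 1 * X 2)
    = (if d = single 0 2 then a₁ else 0) + (if d = single 0 4 then a₂ else 0)
      + (if d = single 0 5 then (1:K) else 0)
      + (if d = single 1 1 + single 2 1 then (1:K) else 0) := by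
  have h1 : (X 1 * X 2 : MvPowerSeries (Fin 3) K)
      = monomial (R := K) (single 1 1 + single 2 1) 1 := by
    rw [X, X, monomial_mul_monomial, one_mul]
  have h2 : ∀ (a : K) (n : ℕ), (C (σ := Fin 3) (R := K) a * X 0 ^ n) = monomial (R := K) (single 0 n) a := by
    intro a n
    rw [X_pow_eq, ← monomial_zero_eq_C_apply, monomial_mul_monomial, zero_add, mul_one]
  rw [h1, h2, h2, X_pow_eq]
  simp [coeff_monomial, mul_ite]

lemma add_single_eq_single_iff (i : Fin 3) (k : ℕ) (m : Fin 3 →₀ ℕ) :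
    m + single i 1 = single i (k+1) ↔ m = single i k := by
  rw [single_add, add_left_inj]

lemma pd0 [CharP K 2] (a₁ a₂ : K) :
    pd 0 (C (σ := Fin 3) (R := K) a₁ * X 0 ^ 2 + C (σ := Fin 3) (R := K) a₂ * X 0 ^ 4 + X 0 ^ 5 + X 1 * X 2)
      = X 0 ^ 4 := by
  funext m
  show ((m 0 + 1 : ℕ) : K) * coeff (R := K) (m + single 0 1) _ = _
  have hX : (X 0 ^ 4 : MvPowerSeries (Fin 3) K) m
      = if m = single 0 4 then (1:K) else 0 := by
    rw [show (X 0 ^ 4 : MvPowerSeries (Fin 3) K) m = coeff (R := K) m (X 0 ^ 4) from rfl,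
      X_pow_eq, coeff_monomial]
  rw [f_coeff, hX]
  have h4 : ¬ (m + single 0 1 = single 1 1 + single 2 1) := by
    intro h
    have := DFunLike.congr_fun h 0
    simp at this
  simp only [show ((m + single 0 1 = (single 0 2 : Fin 3 →₀ ℕ)) ↔ (m = single 0 1)) from
      add_single_eq_single_iff 0 1 m,
    show ((m + single 0 1 = (single 0 4 : Fin 3 →₀ ℕ)) ↔ (m = single 0 3)) from
      add_single_eq_single_iff 0 3 m,
    show ((m + single 0 1 = (single 0 5 : Fin 3 →₀ ℕ)) ↔ (m = single 0 4)) from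
      add_single_eq_single_iff 0 4 m, if_neg h4, add_zero]
  have c2 : ((2:ℕ):K) = 0 := CharP.cast_eq_zero K 2
  have c4 : ((4:ℕ):K) = 0 := by
    have : ((4:ℕ):K) = ((2:ℕ):K) * ((2:ℕ):K) := by norm_num
    rw [this, c2, mul_zero]
  have ne13 : (single 0 1 : Fin 3 →₀ ℕ) ≠ single 0 3 := by
    simp [Finsupp.single_eq_single_iff]
  have ne14 : (single 0 1 : Fin 3 →₀ ℕ) ≠ single 0 4 := by
    simp [Finsupp.single_eq_single_iff]
  have ne31 : (single 0 3 : Fin 3 →₀ ℕ) ≠ single 0 1 := by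
    simp [Finsupp.single_eq_single_iff]
  have ne34 : (single 0 3 : Fin 3 →₀ ℕ) ≠ single 0 4 := by
    simp [Finsupp.single_eq_single_iff]
  have ne41 : (single 0 4 : Fin 3 →₀ ℕ) ≠ single 0 1 := by
    simp [Finsupp.single_eq_single_iff]
  have ne43 : (single 0 4 : Fin 3 →₀ ℕ) ≠ single 0 3 := by
    simp [Finsupp.single_eq_single_iff]
  by_cases h1 : m = single 0 1
  · subst h1
    rw [if_pos rfl, if_neg ne13, if_neg ne14, single_eq_same]
    rw [show ((1+1:ℕ):K) = ((2:ℕ):K) from by norm_num, c2, zero_mul]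
  by_cases h3 : m = single 0 3
  · subst h3
    rw [if_neg ne31, if_pos rfl, if_neg ne34, single_eq_same]
    rw [show ((3+1:ℕ):K) = ((4:ℕ):K) from by norm_num, c4, zero_mul]
  by_cases h4' : m = single 0 4
  · subst h4'
    rw [if_neg ne41, if_neg ne43, if_pos rfl, single_eq_same]
    rw [show ((4+1:ℕ):K) = ((4:ℕ):K) + 1 from by push_cast; ring, c4]
    ring
  · rw [if_neg h1, if_neg h3, if_neg h4']
    simp

lemma pd1 (a₁ a₂ : K) :
    pd 1 (C (σ := Fin 3) (R := K) a₁ * X 0 ^ 2 + C (σ := Fin 3) (R := K) a₂ * X 0 ^ 4 + X 0 ^ 5 + X 1 * X 2)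
      = X 2 := by
  funext m
  show ((m 1 + 1 : ℕ) : K) * coeff (R := K) (m + single 1 1) _ = _
  have hX : (X 2 : MvPowerSeries (Fin 3) K) m = if m = single 2 1 then (1:K) else 0 := by
    rw [show (X 2 : MvPowerSeries (Fin 3) K) m = coeff (R := K) m (X 2) from rfl,
      show (X 2 : MvPowerSeries (Fin 3) K) = monomial (R := K) (single 2 1) 1 from by rw [X],
      coeff_monomial]
  rw [f_coeff, hX]
  have h1 : ∀ k : ℕ, ¬ (m + single 1 1 = single 0 k) := by
    intro k h
    have := DFunLike.congr_fun h 1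
    simp [Finsupp.single_apply] at this
  have h2 : (m + single 1 1 = single 1 1 + single 2 1) ↔ m = single 2 1 := by
    rw [add_comm (single 1 1 : Fin 3 →₀ ℕ) (single 2 1), add_left_inj]
  rw [if_neg (h1 2), if_neg (h1 4), if_neg (h1 5)]
  simp only [h2]
  by_cases h : m = single 2 1
  · subst h
    rw [if_pos rfl]
    simp [Finsupp.single_apply]
  · rw [if_neg h]
    simp

lemma pd2 (a₁ a₂ : K) :
    pd 2 (C (σ := Fin 3) (R := K) a₁ * X 0 ^ 2 + C (σ := Fin 3) (R := K) a₂ * X 0 ^ 4 + X 0 ^ 5 + X 1 * X 2)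
      = X 1 := by
  funext m
  show ((m 2 + 1 : ℕ) : K) * coeff (R := K) (m + single 2 1) _ = _
  have hX : (X 1 : MvPowerSeries (Fin 3) K) m = if m = single 1 1 then (1:K) else 0 := by
    rw [show (X 1 : MvPowerSeries (Fin 3) K) m = coeff (R := K) m (X 1) from rfl,
      show (X 1 : MvPowerSeries (Fin 3) K) = monomial (R := K) (single 1 1) 1 from by rw [X],
      coeff_monomial]
  rw [f_coeff, hX]
  have h1 : ∀ k : ℕ, ¬ (m + single 2 1 = single 0 k) := by
    intro k h
    have := DFunLike.congr_fun h 2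
    simp [Finsupp.single_apply] at this
  have h2 : (m + single 2 1 = single 1 1 + single 2 1) ↔ m = single 1 1 := by
    rw [add_left_inj]
  rw [if_neg (h1 2), if_neg (h1 4), if_neg (h1 5)]
  simp only [h2]
  by_cases h : m = single 1 1
  · subst h
    rw [if_pos rfl]
    simp [Finsupp.single_apply]
  · rw [if_neg h]
    simp

noncomputable def phi (K : Type) [Field K] : MvPowerSeries (Fin 3) K →ₗ[K] (Fin 4 → K) :=
  LinearMap.pi fun k : Fin 4 => coeff (R := K) (single 0 (k : ℕ))

lemma phi_surj : Function.Surjective (phi K) := by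
  intro c
  refine ⟨∑ k : Fin 4, monomial (R := K) (single 0 (k : ℕ)) (c k), ?_⟩
  funext j
  simp only [phi, LinearMap.pi_apply]
  rw [map_sum]
  have : ∀ k : Fin 4, coeff (R := K) (single (0:Fin 3) (j:ℕ)) (monomial (R := K) (single (0:Fin 3) (k:ℕ)) (c k))
      = if k = j then c k else 0 := by
    intro k
    rw [coeff_monomial]
    congr 1
    simp only [eq_iff_iff]
    constructor
    · intro h
      have := DFunLike.congr_fun h 0
      simp at this
      exact Fin.ext this.symm
    · rintro rfl; rfl
  trans ∑ x : Fin 4, if x = j then c x else 0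
  · exact Finset.sum_congr rfl fun k _ => this k
  · simp

noncomputable def shift (s : Fin 3 →₀ ℕ) (g : MvPowerSeries (Fin 3) K) :
    MvPowerSeries (Fin 3) K :=
  fun m => coeff (R := K) (m + s) g

lemma mono_mul_shift (s : Fin 3 →₀ ℕ) (g : MvPowerSeries (Fin 3) K)
    (h : ∀ m, ¬ s ≤ m → coeff (R := K) m g = 0) :
    monomial (R := K) s 1 * shift s g = g := by
  apply MvPowerSeries.ext
  intro m
  rw [coeff_monomial_mul]
  split_ifs with hs
  · rw [one_mul]
    show coeff (R := K) (m - s + s) g = coeff (R := K) m g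
    rw [tsub_add_cancel_of_le hs]
  · exact (h m hs).symm

lemma coeff_mono_mul_shift (s : Fin 3 →₀ ℕ) (g : MvPowerSeries (Fin 3) K) (m : Fin 3 →₀ ℕ) :
    coeff (R := K) m (monomial (R := K) s 1 * shift s g)
      = if s ≤ m then coeff (R := K) m g else 0 := by
  rw [coeff_monomial_mul]
  split_ifs with hs
  · rw [one_mul]
    show coeff (R := K) (m - s + s) g = coeff (R := K) m g
    rw [tsub_add_cancel_of_le hs]
  · rfl

lemma span_le_ker (g : MvPowerSeries (Fin 3) K)
    (hg : g ∈ Ideal.span ({X 0 ^ 4, X 1, X 2} : Set (MvPowerSeries (Fin 3) K))) :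
    phi K g = 0 := by
  rw [Ideal.mem_span_insert] at hg
  obtain ⟨a, z, hz, rfl⟩ := hg
  rw [Ideal.mem_span_insert] at hz
  obtain ⟨b, w, hw, rfl⟩ := hz
  rw [Ideal.mem_span_singleton] at hw
  obtain ⟨c, rfl⟩ := hw
  funext k
  simp only [phi, LinearMap.pi_apply, Pi.zero_apply]
  have e0 : (X 0 ^ 4 : MvPowerSeries (Fin 3) K) = monomial (R := K) (single 0 4) 1 := X_pow_eq 0 4
  have e1 : (X 1 : MvPowerSeries (Fin 3) K) = monomial (R := K) (single 1 1) 1 := by rw [X]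
  have e2 : (X 2 : MvPowerSeries (Fin 3) K) = monomial (R := K) (single 2 1) 1 := by rw [X]
  have h0 : ¬ (single (0:Fin 3) 4 ≤ single (0:Fin 3) (k:ℕ)) := by
    simp only [Finsupp.single_le_iff, single_eq_same]
    omega
  have h1 : ¬ (single (1:Fin 3) 1 ≤ single (0:Fin 3) (k:ℕ)) := by
    simp [Finsupp.single_le_iff, Finsupp.single_apply]
  have h2 : ¬ (single (2:Fin 3) 1 ≤ single (0:Fin 3) (k:ℕ)) := by
    simp [Finsupp.single_le_iff, Finsupp.single_apply]
  rw [map_add, map_add, e0, e1, e2, mul_comm a, mul_comm b, mul_comm _ c,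
    coeff_monomial_mul, coeff_monomial_mul, coeff_mul_monomial,
    if_neg h0, if_neg h1, if_neg h2]
  simp

lemma ker_le_span (g : MvPowerSeries (Fin 3) K)
    (hg' : ∀ k : Fin 4, coeff (R := K) (single (0:Fin 3) (k:ℕ)) g = 0) :
    g ∈ Ideal.span ({X 0 ^ 4, X 1, X 2} : Set (MvPowerSeries (Fin 3) K)) := by
  have e1 : (X 1 : MvPowerSeries (Fin 3) K) = monomial (R := K) (single 1 1) 1 := by rw [X]
  have e2 : (X 2 : MvPowerSeries (Fin 3) K) = monomial (R := K) (single 2 1) 1 := by rw [X]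
  set q1 := shift (single 1 1) g with hq1
  set r1 := g - X 1 * q1 with hr1def
  have hXq1 : ∀ m, coeff (R := K) m (X 1 * q1) = if single (1:Fin 3) 1 ≤ m then coeff (R := K) m g else 0 := by
    intro m; rw [e1]; exact coeff_mono_mul_shift _ _ _
  set q2 := shift (single 2 1) r1 with hq2
  set r2 := r1 - X 2 * q2 with hr2def
  have hXq2 : ∀ m, coeff (R := K) m (X 2 * q2) = if single (2:Fin 3) 1 ≤ m then coeff (R := K) m r1 else 0 := by
    intro m; rw [e2]; exact coeff_mono_mul_shift _ _ _
  have hr2 : ∀ m, ¬ single (0:Fin 3) 4 ≤ m → coeff (R := K) m r2 = 0 := by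
    intro m hm
    rw [hr2def, map_sub, hXq2 m]
    by_cases h2 : single (2:Fin 3) 1 ≤ m
    · rw [if_pos h2, sub_self]
    rw [if_neg h2, sub_zero, hr1def, map_sub, hXq1 m]
    by_cases h1 : single (1:Fin 3) 1 ≤ m
    · rw [if_pos h1, sub_self]
    rw [if_neg h1, sub_zero]
    have hm1 : m 1 = 0 := by
      rw [Finsupp.single_le_iff] at h1; omega
    have hm2 : m 2 = 0 := by
      rw [Finsupp.single_le_iff] at h2; omega
    have hm0 : m 0 < 4 := by
      by_contra h
      exact hm (by rw [Finsupp.single_le_iff]; omega)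
    have hmeq : m = single (0:Fin 3) (m 0) := by
      ext j
      fin_cases j
      · simp
      · simpa [Finsupp.single_apply] using hm1
      · simpa [Finsupp.single_apply] using hm2
    have := hg' ⟨m 0, hm0⟩
    rw [hmeq]
    exact this
  have hdiv : monomial (R := K) (single (0:Fin 3) 4) 1 * shift (single 0 4) r2 = r2 :=
    mono_mul_shift _ _ hr2
  have hgdec : g = X 1 * q1 + X 2 * q2 + X 0 ^ 4 * shift (single 0 4) r2 := by
    rw [X_pow_eq, hdiv, hr2def, hr1def]
    ring
  rw [hgdec]
  have m0 : (X 0 ^ 4 : MvPowerSeries (Fin 3) K) ∈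
      Ideal.span ({X 0 ^ 4, X 1, X 2} : Set (MvPowerSeries (Fin 3) K)) :=
    Ideal.subset_span (by simp)
  have m1 : (X 1 : MvPowerSeries (Fin 3) K) ∈
      Ideal.span ({X 0 ^ 4, X 1, X 2} : Set (MvPowerSeries (Fin 3) K)) :=
    Ideal.subset_span (by simp)
  have m2 : (X 2 : MvPowerSeries (Fin 3) K) ∈
      Ideal.span ({X 0 ^ 4, X 1, X 2} : Set (MvPowerSeries (Fin 3) K)) :=
    Ideal.subset_span (by simp)
  exact Ideal.add_mem _ (Ideal.add_mem _ (Ideal.mul_mem_right _ _ m1)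
    (Ideal.mul_mem_right _ _ m2)) (Ideal.mul_mem_right _ _ m0)

theorem stmt15 (K : Type) [Field K] [CharP K 2] (a₁ a₂ : K) :
    milnor K (C (σ := Fin 3) (R := K) a₁ * X 0 ^ 2 + C (σ := Fin 3) (R := K) a₂ * X 0 ^ 4 + X 0 ^ 5
      + X 1 * X 2) = 4 := by
  unfold milnor
  have hrange : (Set.range fun i : Fin 3 => pd i (C (σ := Fin 3) (R := K) a₁ * X 0 ^ 2
      + C (σ := Fin 3) (R := K) a₂ * X 0 ^ 4 + X 0 ^ 5 + X 1 * X 2))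
      = ({X 0 ^ 4, X 1, X 2} : Set (MvPowerSeries (Fin 3) K)) := by
    ext g
    constructor
    · rintro ⟨i, rfl⟩
      fin_cases i
      · show pd 0 _ ∈ _; rw [pd0]; simp
      · show pd 1 _ ∈ _; rw [pd1]; simp
      · show pd 2 _ ∈ _; rw [pd2]; simp
    · rintro (rfl | rfl | rfl)
      exacts [⟨0, pd0 a₁ a₂⟩, ⟨2, pd2 a₁ a₂⟩, ⟨1, pd1 a₁ a₂⟩]
  rw [hrange]
  have hker : (Ideal.span ({X 0 ^ 4, X 1, X 2} :
      Set (MvPowerSeries (Fin 3) K))).restrictScalars K = LinearMap.ker (phi K) := by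
    apply le_antisymm
    · intro g hg
      exact LinearMap.mem_ker.mpr (span_le_ker g hg)
    · intro g hg
      apply ker_le_span
      intro k
      have := congrFun (LinearMap.mem_ker.mp hg) k
      simpa [phi] using this
  have E : (MvPowerSeries (Fin 3) K ⧸ Ideal.span ({X 0 ^ 4, X 1, X 2} :
      Set (MvPowerSeries (Fin 3) K))) ≃ₗ[K] (Fin 4 → K) :=
    ((Submodule.Quotient.restrictScalarsEquiv K _).symm.trans
      (Submodule.quotEquivOfEq _ _ hker)).trans
      ((phi K).quotKerEquivOfSurjective phi_surj)
  rw [E.finrank_eq]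
  exact Module.finrank_fin_fun K
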